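/- Let r ≥ 2 and 1 ≤ s ≤ r be integers with gcd(r, s) = 1. Then for every k ∈ {1, …, r}: ⌊(r−k)(r−s)/r⌋ = ⌊(r+1−k)(r−s)/r⌋ if and only if there exists l ∈ {1, …, s} with k = ⌈l·r/s⌉. -/

import Mathlib

/-- `⌊α_k⌋ = ⌊k(r−s)/r⌋`. -/
noncomputable def alphaFloor (r s k : ℕ) : ℤ :=
  ⌊((k : ℚ) * ((r : ℚ) - (s : ℚ))) / (r : ℚ)⌋

/-- Floor of a quotient of naturals is natural division. -/
lemma floor_nat_div (a b : ℕ) : ⌊((a : ℚ)) / (b : ℚ)⌋ = ((a / b : ℕ) : ℤ) := by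
  rw [← Nat.floor_div_eq_div (K := ℚ) a b,
    Int.natCast_floor_eq_floor (div_nonneg (by positivity) (by positivity))]

/-- Core combinatorial lemma, in natural numbers. -/
lemma core (r s k : ℕ) (hs1 : 1 ≤ s) (hsr : s ≤ r) (hk1 : 1 ≤ k) (hkr : k ≤ r) :
    (r - k) * (r - s) / r = ((r - k) + 1) * (r - s) / r ↔
      ∃ l : ℕ, 1 ≤ l ∧ l ≤ s ∧ (k - 1) * s < l * r ∧ l * r ≤ k * s := by
  have hr0 : 0 < r := lt_of_lt_of_le hs1 hsr
  set m := r - k with hm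
  set t := r - s with ht
  have hmk : m + k = r := by omega
  have hts : t + s = r := by omega
  have hks : (k - 1) * s + s = k * s := by
    cases k with
    | zero => omega
    | succ n => simp [Nat.succ_sub_one]; ring
  -- m*t ≡ k*s (mod r)
  have hmod : m * t % r = k * s % r := by
    have hid : m * t + (s + k) * r = k * s + r * r := by
      have h : (m + k) * (t + s) = r * r := by rw [hmk, hts]
      nlinarith [h]
    calc m * t % r = (m * t + (s + k) * r) % r := (Nat.add_mul_mod_self_right _ _ _).symm
      _ = (k * s + r * r) % r := by rw [hid]
      _ = k * s % r := Nat.add_mul_mod_self_right _ _ _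
  -- the floor condition is equivalent to `k*s % r < s`
  have key : m * t / r = (m + 1) * t / r ↔ k * s % r < s := by
    have hd := Nat.div_add_mod (m * t) r
    have hlt : m * t % r < r := Nat.mod_lt _ hr0
    have hstep : (m + 1) * t = (m * t % r + t) + (m * t / r) * r := by
      calc (m + 1) * t = m * t + t := by ring
        _ = (r * (m * t / r) + m * t % r) + t := by rw [hd]
        _ = (m * t % r + t) + (m * t / r) * r := by ring
    have hexp : (m + 1) * t / r = (m * t % r + t) / r + m * t / r := by
      rw [hstep, Nat.add_mul_div_right _ _ hr0]
    constructor
    · intro h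
      have h0 : (m * t % r + t) / r = 0 := by omega
      have h2 : m * t % r + t < r := by
        by_contra hge
        push_neg at hge
        have := Nat.div_pos hge hr0
        omega
      omega
    · intro h
      have h2 : m * t % r + t < r := by omega
      rw [hexp, Nat.div_eq_of_lt h2, zero_add]
  rw [key]
  constructor
  · intro h
    have hd := Nat.div_add_mod (k * s) r
    refine ⟨k * s / r, ?_, ?_, ?_, Nat.div_mul_le_self _ _⟩
    · rcases Nat.eq_zero_or_pos (k * s / r) with h0 | h0
      · exfalso
        have hlt : k * s < r := by
          by_contra hge
          push_neg at hge
          have := Nat.div_pos hge hr0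
          omega
        have hmeq := Nat.mod_eq_of_lt hlt
        have hsk : s ≤ k * s := Nat.le_mul_of_pos_left s hk1
        omega
      · exact h0
    · have h1 : (k * s / r) * r ≤ k * s := Nat.div_mul_le_self _ _
      have h2 : k * s ≤ s * r := by nlinarith
      exact Nat.le_of_mul_le_mul_right (le_trans h1 h2) hr0
    · rw [mul_comm (k * s / r) r]
      omega
  · rintro ⟨l, hl1, hls, hlo, hhi⟩
    have hρ : k * s - l * r < s := by omega
    have hme : k * s % r = k * s - l * r := by
      calc k * s % r = (l * r + (k * s - l * r)) % r := by rw [Nat.add_sub_cancel' hhi]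
        _ = (r * l + (k * s - l * r)) % r := by rw [mul_comm l r]
        _ = (k * s - l * r) % r := by rw [Nat.mul_add_mod]
        _ = k * s - l * r := Nat.mod_eq_of_lt (by omega)
    omega

/-- For coprime `r, s` with `r ≥ 2`, `1 ≤ s ≤ r`, and `1 ≤ k ≤ r`:
`⌊(r−k)(r−s)/r⌋ = ⌊(r+1−k)(r−s)/r⌋` if and only if `k = ⌈l·r/s⌉` for some `l ∈ {1, …, s}`. -/
theorem stmt13 (r s : ℕ) (hr : 2 ≤ r) (hs1 : 1 ≤ s) (hsr : s ≤ r)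
    (hcop : Nat.Coprime r s) (k : ℕ) (hk1 : 1 ≤ k) (hkr : k ≤ r) :
    alphaFloor r s (r - k) = alphaFloor r s (r + 1 - k) ↔
      ∃ l : ℕ, 1 ≤ l ∧ l ≤ s ∧ (k : ℤ) = ⌈((l : ℚ) * (r : ℚ)) / (s : ℚ)⌉ := by
  have hs0 : (0:ℚ) < (s:ℚ) := by exact_mod_cast hs1
  have hcast : ∀ a : ℕ, a ≤ r → alphaFloor r s (r - a) = (((r - a) * (r - s) / r : ℕ) : ℤ) := by
    intro a ha
    unfold alphaFloor
    rw [← floor_nat_div]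
    congr 1
    push_cast [Nat.cast_sub ha, Nat.cast_sub hsr]
    ring
  have e1 : alphaFloor r s (r - k) = (((r - k) * (r - s) / r : ℕ) : ℤ) := hcast k hkr
  have e2 : alphaFloor r s (r + 1 - k) = ((((r - k) + 1) * (r - s) / r : ℕ) : ℤ) := by
    have h : r + 1 - k = r - (k - 1) := by omega
    have h2 : r - (k - 1) = (r - k) + 1 := by omega
    rw [h, hcast (k - 1) (by omega), h2]
  rw [e1, e2, Nat.cast_inj, core r s k hs1 hsr hk1 hkr]
  apply exists_congr
  intro l
  constructor
  · rintro ⟨h1, h2, h3, h4⟩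
    refine ⟨h1, h2, ?_⟩
    symm
    rw [Int.ceil_eq_iff]
    constructor
    · rw [lt_div_iff₀ hs0]
      have hc : (((k - 1) * s : ℕ) : ℚ) < ((l * r : ℕ) : ℚ) := by exact_mod_cast h3
      push_cast [Nat.cast_sub hk1] at hc
      push_cast
      linarith
    · rw [div_le_iff₀ hs0]
      push_cast
      exact_mod_cast h4
  · rintro ⟨h1, h2, h3⟩
    refine ⟨h1, h2, ?_, ?_⟩
    · have hc := (Int.ceil_eq_iff.mp h3.symm).1
      rw [lt_div_iff₀ hs0] at hc
      push_cast at hc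
      have hq : (((k - 1) * s : ℕ) : ℚ) < ((l * r : ℕ) : ℚ) := by
        push_cast [Nat.cast_sub hk1]
        linarith
      exact_mod_cast hq
    · have hc := (Int.ceil_eq_iff.mp h3.symm).2
      rw [div_le_iff₀ hs0] at hc
      exact_mod_cast hc
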